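/- Let γ > 1, δ > 0, and α a positive C² solution of α^{3γ-2} α'' = δ on [0,∞) with initial data α₀ > 0, α₁ ∈ ℝ. Then there exist constants c₁, c₂ > 0 such that α(t)/(c₁ + c₂ t) → 1 as t → ∞; in particular α grows linearly in t. -/

import Mathlib

open Filter


lemma lin_upper (f : ℝ → ℝ) (hf : Differentiable ℝ f) (a m : ℝ)
    (h : ∀ t, a ≤ t → deriv f t ≤ m) : ∀ t, a ≤ t → f t ≤ f a + m * (t - a) := by
  intro t ht
  have key : AntitoneOn (fun t => f t - m * t) (Set.Ici a) := by
    apply antitoneOn_of_deriv_nonpos (convex_Ici a)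
    · exact (hf.sub (differentiable_id.const_mul m)).continuous.continuousOn
    · exact fun x hx => ((hf x).sub (differentiableAt_id.const_mul m)).differentiableWithinAt
    · intro x hx
      rw [interior_Ici] at hx
      have hd : deriv (fun t => f t - m * t) x = deriv f x - m := by
        have h1 : HasDerivAt (fun t : ℝ => m * t) m x := by
          simpa using (hasDerivAt_id x).const_mul m
        exact (((hf x).hasDerivAt).sub h1).deriv
      rw [hd]
      linarith [h x (le_of_lt hx)]
  have := key Set.self_mem_Ici ht ht
  simp only at this
  linarith

lemma lin_lower (f : ℝ → ℝ) (hf : Differentiable ℝ f) (a m : ℝ)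
    (h : ∀ t, a ≤ t → m ≤ deriv f t) : ∀ t, a ≤ t → f a + m * (t - a) ≤ f t := by
  intro t ht
  have := lin_upper (fun s => -f s) hf.neg a (-m) (fun s hs => by
    rw [deriv.fun_neg]; linarith [h s hs]) t ht
  linarith

/-- Linear growth of the self-similar expansion factor. -/
theorem stmt_3 (γ δ α₀ α₁ : ℝ) (hγ : 1 < γ) (hδ : 0 < δ) (hα₀ : 0 < α₀)
    (α : ℝ → ℝ) (hC2 : ContDiff ℝ 2 α)
    (hpos : ∀ t, 0 ≤ t → 0 < α t)
    (hODE : ∀ t, 0 ≤ t → α t ^ (3 * γ - 2) * deriv (deriv α) t = δ)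
    (h0 : α 0 = α₀) (h0' : deriv α 0 = α₁) :
    ∃ c₁ c₂ : ℝ, 0 < c₁ ∧ 0 < c₂ ∧
      Tendsto (fun t => α t / (c₁ + c₂ * t)) atTop (nhds 1) := by
  have hdiff : Differentiable ℝ α := hC2.differentiable (by norm_num)
  have hC1' : ContDiff ℝ 1 (deriv α) := by
    have := (contDiff_succ_iff_deriv (n := 1)).mp (by exact_mod_cast hC2)
    exact this.2.2
  have hdiff' : Differentiable ℝ (deriv α) := hC1'.differentiable one_ne_zero
  have h3γ : (0:ℝ) < 3 * γ - 3 := by linarith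
  -- second derivative formula
  have hα'' : ∀ t, 0 ≤ t → deriv (deriv α) t = δ * α t ^ (2 - 3 * γ) := by
    intro t ht
    have hp := hpos t ht
    have h1 : α t ^ (3 * γ - 2) ≠ 0 := (Real.rpow_pos_of_pos hp _).ne'
    have h2 := hODE t ht
    have h3 : deriv (deriv α) t = δ / α t ^ (3 * γ - 2) := by
      field_simp at h2 ⊢
      linarith [h2]
    rw [h3, div_eq_mul_inv, ← Real.rpow_neg hp.le]
    norm_num
  -- energy
  set C : ℝ := 2 * δ / (3 * γ - 3) with hC_def
  have hCpos : 0 < C := by positivity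
  set E : ℝ → ℝ := fun t => (deriv α t) ^ 2 + C * α t ^ (3 - 3 * γ) with hE_def
  have hEderiv : ∀ t, 0 ≤ t → HasDerivAt E 0 t := by
    intro t ht
    have hp := hpos t ht
    have h1 : HasDerivAt (fun s => (deriv α s) ^ 2)
        (2 * deriv α t * deriv (deriv α) t) t := by
      simpa using ((hdiff' t).hasDerivAt.fun_pow 2)
    have h2 : HasDerivAt (fun s => α s ^ (3 - 3 * γ))
        (deriv α t * (3 - 3 * γ) * α t ^ (3 - 3 * γ - 1)) t :=
      (hdiff t).hasDerivAt.rpow_const (Or.inl hp.ne')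
    have h3 := h1.add (h2.const_mul C)
    have h4 : 2 * deriv α t * deriv (deriv α) t
        + C * (deriv α t * (3 - 3 * γ) * α t ^ (3 - 3 * γ - 1)) = 0 := by
      rw [hα'' t ht, hC_def]
      have he : (3 - 3 * γ - 1 : ℝ) = 2 - 3 * γ := by ring
      rw [he]
      have hc : 2 * δ / (3 * γ - 3) * (3 - 3 * γ) = -(2 * δ) := by
        rw [div_mul_eq_mul_div, show (3 - 3 * γ) = -(3 * γ - 3) by ring, mul_neg, neg_div,
          mul_div_assoc, div_self h3γ.ne', mul_one]
      linear_combination (deriv α t * α t ^ (2 - 3 * γ)) * hc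
    rw [h4] at h3
    exact h3
  have hEconst : ∀ t, 0 ≤ t → E t = E 0 := by
    intro b hb
    have hcont : ContinuousOn E (Set.Icc 0 b) := fun x hx =>
      ((hEderiv x hx.1).continuousAt).continuousWithinAt
    have hder : ∀ x ∈ Set.Ico (0:ℝ) b, HasDerivWithinAt E 0 (Set.Ici x) x := fun x hx =>
      (hEderiv x hx.1).hasDerivWithinAt
    exact constant_of_has_deriv_right_zero hcont hder b (Set.right_mem_Icc.mpr hb)
  set E₀ : ℝ := E 0 with hE₀_def
  have hE₀pos : 0 < E₀ := by
    have h00 : E₀ = (deriv α 0) ^ 2 + C * α 0 ^ (3 - 3 * γ) := rfl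
    have h01 : 0 < C * α 0 ^ (3 - 3 * γ) := by
      have := Real.rpow_pos_of_pos (hpos 0 le_rfl) (3 - 3 * γ)
      positivity
    rw [h00]
    nlinarith [sq_nonneg (deriv α 0)]
  set c₂ : ℝ := Real.sqrt E₀ with hc₂_def
  have hc₂pos : 0 < c₂ := Real.sqrt_pos.mpr hE₀pos
  -- bound on the derivative
  have hsqle : ∀ t, 0 ≤ t → (deriv α t) ^ 2 ≤ E₀ := by
    intro t ht
    have h1 := hEconst t ht
    have h2 : 0 < C * α t ^ (3 - 3 * γ) := by
      have := Real.rpow_pos_of_pos (hpos t ht) (3 - 3 * γ)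
      positivity
    rw [hE_def] at h1
    simp only at h1
    nlinarith
  have hble : ∀ t, 0 ≤ t → deriv α t ≤ c₂ := by
    intro t ht
    calc deriv α t ≤ |deriv α t| := le_abs_self _
    _ = Real.sqrt ((deriv α t) ^ 2) := (Real.sqrt_sq_eq_abs _).symm
    _ ≤ c₂ := Real.sqrt_le_sqrt (hsqle t ht)
  -- monotonicity of the derivative
  have hmono : MonotoneOn (deriv α) (Set.Ici 0) := by
    apply monotoneOn_of_deriv_nonneg (convex_Ici 0) hC1'.continuous.continuousOn
      (fun x _ => (hdiff' x).differentiableWithinAt)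
    intro x hx
    rw [interior_Ici] at hx
    rw [hα'' x hx.le]
    have := Real.rpow_pos_of_pos (hpos x hx.le) (2 - 3 * γ)
    positivity
  -- there is a point with positive derivative
  obtain ⟨t₀, ht₀0, hε₀⟩ : ∃ t₀, 0 ≤ t₀ ∧ 0 < deriv α t₀ := by
    by_contra hcon
    push_neg at hcon
    have hub : ∀ t, 0 ≤ t → α t ≤ α 0 := by
      intro t ht
      have := lin_upper α hdiff 0 0 (fun s hs => hcon s hs) t ht
      simpa using this
    set m : ℝ := δ * α 0 ^ (2 - 3 * γ) with hm_def
    have hmpos : 0 < m := by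
      have := Real.rpow_pos_of_pos (hpos 0 le_rfl) (2 - 3 * γ)
      positivity
    have hlow : ∀ t, 0 ≤ t → m ≤ deriv (deriv α) t := by
      intro t ht
      rw [hα'' t ht, hm_def]
      have h1 : α 0 ^ (2 - 3 * γ) ≤ α t ^ (2 - 3 * γ) := by
        apply Real.rpow_le_rpow_of_nonpos (hpos t ht) (hub t ht)
        linarith
      nlinarith
    have hgrow := lin_lower (deriv α) hdiff' 0 m hlow
    obtain ⟨T, hT_def⟩ : ∃ T : ℝ, T = |deriv α 0 / m| + 1 := ⟨_, rfl⟩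
    have hT0 : 0 ≤ T := by rw [hT_def]; positivity
    have h1 := hgrow T hT0
    have h2 := hcon T hT0
    have h3 : -(deriv α 0) / m < T := by
      rw [hT_def]
      calc -(deriv α 0) / m ≤ |(-(deriv α 0)) / m| := le_abs_self _
      _ = |deriv α 0 / m| := by rw [abs_div, abs_div, abs_neg]
      _ < |deriv α 0 / m| + 1 := by linarith
    rw [div_lt_iff₀ hmpos] at h3
    nlinarith
  -- α tends to infinity
  have hαlow : ∀ t, t₀ ≤ t → α t₀ + deriv α t₀ * (t - t₀) ≤ α t := by
    apply lin_lower α hdiff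
    intro s hs
    exact hmono (Set.mem_Ici.mpr ht₀0) (Set.mem_Ici.mpr (ht₀0.trans hs)) hs
  have hαtop : Tendsto α atTop atTop := by
    apply tendsto_atTop_mono' atTop (f₁ := fun t => α t₀ + deriv α t₀ * (t - t₀))
    · filter_upwards [eventually_ge_atTop t₀] with t ht using hαlow t ht
    · apply tendsto_atTop_add_const_left
      apply Tendsto.const_mul_atTop hε₀
      exact tendsto_atTop_add_const_right _ _ tendsto_id
  -- the potential term vanishes
  have hrpow0 : Tendsto (fun t => α t ^ (3 - 3 * γ)) atTop (nhds 0) := by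
    have h := tendsto_rpow_neg_atTop h3γ
    have h2 := h.comp hαtop
    have he : (fun t => α t ^ (3 - 3 * γ)) = (fun x : ℝ => x ^ (-(3 * γ - 3))) ∘ α := by
      funext t
      simp only [Function.comp_apply]
      norm_num
    rw [he]
    exact h2
  -- derivative tends to c₂
  have hsqlim : Tendsto (fun t => (deriv α t) ^ 2) atTop (nhds E₀) := by
    have h1 : Tendsto (fun t => E₀ - C * α t ^ (3 - 3 * γ)) atTop (nhds (E₀ - C * 0)) :=
      tendsto_const_nhds.sub (hrpow0.const_mul C)
    rw [mul_zero, sub_zero] at h1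
    apply h1.congr'
    filter_upwards [eventually_ge_atTop (0:ℝ)] with t ht
    have := hEconst t ht
    rw [hE_def] at this
    simp only at this
    linarith
  have hd'lim : Tendsto (deriv α) atTop (nhds c₂) := by
    have h1 : Tendsto (fun t => Real.sqrt ((deriv α t) ^ 2)) atTop (nhds c₂) := by
      rw [hc₂_def]
      exact (Real.continuous_sqrt.continuousAt.tendsto.comp hsqlim)
    apply h1.congr'
    filter_upwards [eventually_ge_atTop t₀] with t ht
    have hpos' : 0 < deriv α t :=
      lt_of_lt_of_le hε₀ (hmono (Set.mem_Ici.mpr ht₀0) (Set.mem_Ici.mpr (ht₀0.trans ht)) ht)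
    rw [Real.sqrt_sq_eq_abs, abs_of_pos hpos']
  -- α t / t tends to c₂
  have hub : ∀ t, 0 ≤ t → α t ≤ α 0 + c₂ * t := by
    intro t ht
    have := lin_upper α hdiff 0 c₂ (fun s hs => hble s hs) t ht
    simpa using this
  have hdivlim : Tendsto (fun t => α t / t) atTop (nhds c₂) := by
    rw [Metric.tendsto_nhds]
    intro ε hε
    obtain ⟨T, hT1, hT2⟩ := ((hd'lim.eventually
      (eventually_gt_nhds (show c₂ - ε / 2 < c₂ by linarith))).and
      (eventually_ge_atTop (max t₀ 0))).exists
    have hT0 : (0:ℝ) ≤ T := le_trans (le_max_right _ _) hT2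
    have hlowT : ∀ t, T ≤ t → α T + (c₂ - ε / 2) * (t - T) ≤ α t := by
      apply lin_lower α hdiff
      intro s hs
      exact le_of_lt (lt_of_lt_of_le hT1
        (hmono (Set.mem_Ici.mpr hT0) (Set.mem_Ici.mpr (hT0.trans hs)) hs))
    obtain ⟨A, hA_def⟩ : ∃ A : ℝ, A = α T - (c₂ - ε / 2) * T := ⟨_, rfl⟩
    filter_upwards [eventually_ge_atTop (max T 1),
      eventually_gt_atTop (max (α 0 / ε) (2 * |A| / ε))] with t ht1 ht2
    have htT : T ≤ t := le_trans (le_max_left _ _) ht1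
    have htpos : (0:ℝ) < t := lt_of_lt_of_le one_pos (le_trans (le_max_right _ _) ht1)
    have hu := hub t (hT0.trans htT)
    have hl := hlowT t htT
    have hq1 : α 0 / ε < t := lt_of_le_of_lt (le_max_left _ _) ht2
    have hq2 : 2 * |A| / ε < t := lt_of_le_of_lt (le_max_right _ _) ht2
    rw [div_lt_iff₀ hε] at hq1 hq2
    have habs1 : A ≤ |A| := le_abs_self A
    have habs2 : -|A| ≤ A := neg_abs_le A
    rw [Real.dist_eq]
    have he1 : α t / t - c₂ = (α t - c₂ * t) / t := by
      field_simp
    have hexp : α T + (c₂ - ε / 2) * (t - T) = A + (c₂ - ε / 2) * t := by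
      rw [hA_def]; ring
    rw [hexp] at hl
    rw [he1, abs_div, abs_of_pos htpos, div_lt_iff₀ htpos, abs_lt]
    constructor
    · nlinarith
    · nlinarith
  -- conclude
  refine ⟨1, c₂, one_pos, hc₂pos, ?_⟩
  have h2 : Tendsto (fun t : ℝ => t / (1 + c₂ * t)) atTop (nhds c₂⁻¹) := by
    have hbase : Tendsto (fun t : ℝ => t⁻¹ + c₂) atTop (nhds (0 + c₂)) :=
      Tendsto.add tendsto_inv_atTop_zero tendsto_const_nhds
    rw [zero_add] at hbase
    have hinv := hbase.inv₀ hc₂pos.ne'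
    apply hinv.congr'
    filter_upwards [eventually_gt_atTop (0:ℝ)] with t ht
    have hden : (0:ℝ) < 1 + c₂ * t := by positivity
    rw [eq_comm]
    field_simp
  have hfin := hdivlim.mul h2
  rw [mul_inv_cancel₀ hc₂pos.ne'] at hfin
  apply hfin.congr'
  filter_upwards [eventually_gt_atTop (0:ℝ)] with t ht
  have hden : (0:ℝ) < 1 + c₂ * t := by positivity
  rw [div_mul_div_comm, mul_comm (α t) t, mul_div_mul_left _ _ ht.ne']
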